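/- arXiv:1206.0525 — 2 statements merged into one kernel-verified Lean document; each statement's English description precedes it below -/
import Mathlib

section
/- Let p : ℂ → ℂ be a polynomial of degree n ≥ 1 and let b > 0 be a real number. Then ∫_ℂ 2b²·|p'(u)|² / (b² + |p(u)|²)² dλ(u) = 2πn, where λ is Lebesgue measure on ℂ. -/
open MeasureTheory Real Set Polynomial
open scoped ENNReal

namespace Stmt12Helpers


lemma detAux (c : ℂ) :
    ((ContinuousLinearMap.smulRight (1 : ℂ →L[ℂ] ℂ) c).restrictScalars ℝ).det
      = Complex.normSq c := by
  have h : (((ContinuousLinearMap.smulRight (1 : ℂ →L[ℂ] ℂ) c).restrictScalars ℝ)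
      : ℂ →ₗ[ℝ] ℂ) = Algebra.lmul ℝ ℂ c := by
    apply LinearMap.ext
    intro z
    simp [mul_comm]
  rw [ContinuousLinearMap.det, h, ← Algebra.norm_apply, Algebra.norm_complex_apply]


lemma lintegral_polar (f : ℝ × ℝ → ENNReal) :
    (∫⁻ p in polarCoord.target, ENNReal.ofReal p.1 * f (polarCoord.symm p)) = ∫⁻ p, f p := by
  set B : ℝ × ℝ → ℝ × ℝ →L[ℝ] ℝ × ℝ := fun p =>
    LinearMap.toContinuousLinearMap (Matrix.toLin (Module.Basis.finTwoProd ℝ) (Module.Basis.finTwoProd ℝ)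
      !![Real.cos p.2, -p.1 * Real.sin p.2; Real.sin p.2, p.1 * Real.cos p.2])
  have B_det : ∀ p, (B p).det = p.1 := by
    intro p
    conv_rhs => rw [← one_mul p.1, ← cos_sq_add_sin_sq p.2]
    simp only [B, neg_mul, LinearMap.det_toContinuousLinearMap, LinearMap.det_toLin,
      Matrix.det_fin_two_of, sub_neg_eq_add]
    ring
  symm
  calc
    ∫⁻ p, f p = ∫⁻ p in polarCoord.source, f p := by
      rw [← setLIntegral_univ]
      exact (setLIntegral_congr polarCoord_source_ae_eq_univ.symm)
    _ = ∫⁻ p in polarCoord.symm '' polarCoord.target, f p := by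
      rw [polarCoord.symm_image_target_eq_source]
    _ = ∫⁻ p in polarCoord.target, ENNReal.ofReal |(B p).det| * f (polarCoord.symm p) := by
      exact lintegral_image_eq_lintegral_abs_det_fderiv_mul volume
        polarCoord.open_target.measurableSet
        (fun p _ => (hasFDerivAt_polarCoord_symm p).hasFDerivWithinAt)
        polarCoord.symm.injOn f
    _ = ∫⁻ p in polarCoord.target, ENNReal.ofReal p.1 * f (polarCoord.symm p) := by
      apply setLIntegral_congr_fun polarCoord.open_target.measurableSet
      intro p hp
      dsimp only
      rw [B_det, abs_of_pos hp.1]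

lemma lintegral_polar_complex (f : ℂ → ENNReal) (hf : Measurable f) :
    (∫⁻ p in polarCoord.target, ENNReal.ofReal p.1 * f (Complex.polarCoord.symm p))
      = ∫⁻ z, f z := by
  rw [← (Complex.volume_preserving_equiv_real_prod.symm).lintegral_comp hf,
    ← lintegral_polar]
  rfl

section
variable {b : ℝ}

lemma radial_tendsto (hb : 0 < b) : Filter.Tendsto (fun r : ℝ => -(b^2) / (b^2+r^2))
    Filter.atTop (nhds 0) := by
  have h2 : Filter.Tendsto (fun r : ℝ => b^2 + r^2) Filter.atTop Filter.atTop :=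
    Filter.tendsto_atTop_add_const_left _ _ (Filter.tendsto_pow_atTop (by norm_num))
  simpa using Filter.Tendsto.div_atTop (tendsto_const_nhds (x := -(b^2))) h2

lemma radial_deriv (hb : 0 < b) (r : ℝ) :
    HasDerivAt (fun r : ℝ => -(b^2) / (b^2+r^2)) (2*b^2*r/(b^2+r^2)^2) r := by
  have hne : b^2 + r^2 ≠ 0 := by positivity
  have h1 : HasDerivAt (fun r : ℝ => b^2 + r^2) (2*r) r := by
    simpa using (hasDerivAt_pow 2 r).const_add (b^2)
  have := (h1.inv hne).const_mul (-(b^2))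
  convert this using 1
  · rfl
  · rfl
  · funext x
    simp [div_eq_mul_inv]
  · ring

lemma radial_integrable (hb : 0 < b) :
    IntegrableOn (fun r : ℝ => 2*b^2*r/(b^2+r^2)^2) (Ioi 0) := by
  apply integrableOn_Ioi_deriv_of_nonneg' (fun x _ => radial_deriv hb x)
    (fun x hx => by have hx0 : (0:ℝ) < x := hx; positivity) (radial_tendsto hb)

lemma radial_value (hb : 0 < b) : ∫ r in Ioi (0:ℝ), 2*b^2*r/(b^2+r^2)^2 = 1 := by
  rw [integral_Ioi_of_hasDerivAt_of_tendsto' (fun x _ => radial_deriv hb x)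
    (radial_integrable hb) (radial_tendsto hb)]
  have h : b^2 + 0^2 = b^2 := by ring
  rw [h]
  field_simp
  norm_num

end

section
variable {b : ℝ}

lemma gCont (hb : 0 < b) : Continuous (fun w : ℂ => 2*b^2 / (b^2 + ‖w‖^2)^2) :=
  continuous_const.div
    (((continuous_const.add (continuous_norm.pow 2)).pow 2))
    (fun w => by positivity)

lemma base_lintegral (hb : 0 < b) :
    ∫⁻ w : ℂ, ENNReal.ofReal (2*b^2 / (b^2 + ‖w‖^2)^2)
      = ENNReal.ofReal (2*π) := by
  rw [← lintegral_polar_complex _ ((gCont hb).measurable.ennreal_ofReal)]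
  have h1 : ∀ p ∈ polarCoord.target,
      ENNReal.ofReal p.1 * ENNReal.ofReal
          (2*b^2 / (b^2 + ‖Complex.polarCoord.symm p‖^2)^2)
        = ENNReal.ofReal (2*b^2*p.1 / (b^2 + p.1^2)^2) := by
    intro p hp
    rw [Complex.norm_polarCoord_symm, ← ENNReal.ofReal_mul (le_of_lt hp.1)]
    congr 1
    rw [sq_abs]
    ring
  rw [setLIntegral_congr_fun polarCoord.open_target.measurableSet
    h1]
  have htar : polarCoord.target = Ioi (0:ℝ) ×ˢ Ioo (-π) π := rfl
  rw [htar]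
  have hmeas : Measurable (fun q : ℝ × ℝ => ENNReal.ofReal (2*b^2*q.1 / (b^2 + q.1^2)^2)) := by
    apply Measurable.ennreal_ofReal
    apply Measurable.div
    · fun_prop
    · fun_prop
  rw [Measure.volume_eq_prod, ← Measure.prod_restrict,
    lintegral_prod _ hmeas.aemeasurable]
  simp only [lintegral_const, Measure.restrict_apply MeasurableSet.univ, univ_inter,
    Real.volume_Ioo]
  have h2 : π - (-π) = 2*π := by ring
  rw [h2]
  have h3 : ∀ r : ℝ, ENNReal.ofReal (2*b^2*r / (b^2 + r^2)^2) * ENNReal.ofReal (2*π)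
      = ENNReal.ofReal (2*π) * ENNReal.ofReal (2*b^2*r / (b^2 + r^2)^2) := fun r => mul_comm _ _
  rw [lintegral_congr (fun r => h3 r), lintegral_const_mul _ (by fun_prop)]
  have h4 : ∫⁻ r in Ioi (0:ℝ), ENNReal.ofReal (2*b^2*r / (b^2 + r^2)^2) = 1 := by
    rw [← ofReal_integral_eq_lintegral_ofReal (radial_integrable hb)
      ((ae_restrict_iff' measurableSet_Ioi).2 (Filter.Eventually.of_forall
        (fun x hx => by have hx0 : (0:ℝ) < x := hx; positivity))),
      radial_value hb, ENNReal.ofReal_one]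
  rw [h4, mul_one]

end


lemma fiber_card (p : Polynomial ℂ) (n : ℕ) (hn : 1 ≤ n) (hdeg : p.natDegree = n)
    (w : ℂ) (hw : ∀ x : ℂ, p.eval x = w → (derivative p).eval x ≠ 0) :
    ∃ fib : Finset ℂ, (∀ x, x ∈ fib ↔ p.eval x = w) ∧ fib.card = n := by
  classical
  set r : Polynomial ℂ := p - C w with hr
  have hrdeg : r.natDegree = n := by rw [hr, natDegree_sub_C, hdeg]
  have hr0 : r ≠ 0 := by
    intro h
    rw [h] at hrdeg
    simp at hrdeg
    omega
  have hroot : ∀ x : ℂ, r.IsRoot x ↔ p.eval x = w := by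
    intro x
    simp [hr, IsRoot, sub_eq_zero]
  have hcard : Multiset.card r.roots = n := by
    rw [← hrdeg]
    exact (splits_iff_card_roots.mp (IsAlgClosed.splits r))
  have hnodup : r.roots.Nodup := by
    rw [Multiset.nodup_iff_count_le_one]
    intro x
    rw [count_roots]
    by_cases hx : r.IsRoot x
    · have hder : (derivative r).eval x ≠ 0 := by
        have : derivative r = derivative p := by simp [hr]
        rw [this]
        exact hw x ((hroot x).mp hx)
      have h1 : rootMultiplicity x (derivative r) = rootMultiplicity x r - 1 :=
        derivative_rootMultiplicity_of_root hx
      have h2 : rootMultiplicity x (derivative r) = 0 :=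
        rootMultiplicity_eq_zero hder
      omega
    · rw [rootMultiplicity_eq_zero hx]
      omega
  refine ⟨r.roots.toFinset, ?_, ?_⟩
  · intro x
    rw [Multiset.mem_toFinset, mem_roots hr0, hroot]
  · rw [Multiset.toFinset_card_of_nodup hnodup, hcard]


lemma local_inj (p : Polynomial ℂ) (u : ℂ) (hc : (derivative p).eval u ≠ 0) :
    ∃ t : Set ℂ, IsOpen t ∧ u ∈ t ∧ Set.InjOn (fun x => p.eval x) t := by
  set E : ℂ ≃L[ℂ] ℂ := ContinuousLinearEquiv.unitsEquivAut ℂ (Units.mk0 _ hc)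
  have hE : (E : ℂ →L[ℂ] ℂ)
      = ContinuousLinearMap.smulRight (1 : ℂ →L[ℂ] ℂ) ((derivative p).eval u) := rfl
  have hs : HasStrictFDerivAt (fun x => p.eval x) (E : ℂ →L[ℂ] ℂ) u := by
    rw [hE]
    exact p.hasStrictDerivAt u
  refine ⟨(hs.toOpenPartialHomeomorph _).source, (hs.toOpenPartialHomeomorph _).open_source,
    hs.mem_toOpenPartialHomeomorph_source, ?_⟩
  have h := (hs.toOpenPartialHomeomorph _).injOn
  rwa [hs.toOpenPartialHomeomorph_coe] at h

end Stmt12Helpers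

open Stmt12Helpers

/-- for a polynomial `p : ℂ → ℂ` of degree `n ≥ 1` and `b > 0`,
`∫_ℂ 2b²|p'(u)|²/(b² + |p(u)|²)² dλ(u) = 2πn`,
where `λ` is Lebesgue measure on `ℂ`. -/
theorem stmt12 (p : Polynomial ℂ) (n : ℕ) (hn : 1 ≤ n)
    (hdeg : p.natDegree = n) (b : ℝ) (hb : 0 < b) :
    ∫ u : ℂ,
        2 * b ^ 2 * ‖(Polynomial.derivative p).eval u‖ ^ 2 /
          (b ^ 2 + ‖p.eval u‖ ^ 2) ^ 2 ∂volume
      = 2 * π * n := by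
  classical
  set q : Polynomial ℂ := derivative p with hqdef
  set pf : ℂ → ℂ := fun x => p.eval x with hpfdef
  -- the exceptional sets
  have hq0 : q ≠ 0 := by
    intro h
    have := natDegree_eq_zero_of_derivative_eq_zero h
    omega
  set Cs : Set ℂ := {x | q.eval x = 0} with hCsdef
  have hCfin : Cs.Finite := finite_setOf_isRoot hq0
  set V : Set ℂ := pf '' Cs with hVdef
  have hVfin : V.Finite := hCfin.image _
  set B : Set ℂ := pf ⁻¹' V with hBdef
  have hsubne : ∀ v : ℂ, p - C v ≠ 0 := by
    intro v h
    have h2 : (p - C v).natDegree = n := by rw [natDegree_sub_C, hdeg]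
    rw [h] at h2
    simp at h2
    omega
  have hBfin : B.Finite := by
    have hB : B = ⋃ v ∈ V, {x : ℂ | (p - C v).IsRoot x} := by
      ext x
      simp only [hBdef, mem_preimage, mem_iUnion, mem_setOf_eq, IsRoot, eval_sub, eval_C,
        sub_eq_zero, exists_prop]
      constructor
      · intro h; exact ⟨pf x, h, rfl⟩
      · rintro ⟨v, hv, h⟩; rwa [show pf x = v from h]
    rw [hB]
    exact hVfin.biUnion (fun v _ => finite_setOf_isRoot (hsubne v))
  set U : Set ℂ := Bᶜ with hUdef
  have hUopen : IsOpen U := hBfin.isClosed.isOpen_compl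
  have hUne : U.Nonempty := hBfin.infinite_compl.nonempty
  have hUq : ∀ u ∈ U, q.eval u ≠ 0 := by
    intro u hu hq
    exact hu (mem_image_of_mem pf hq)
  -- countable cover of U by sets of injectivity
  set ι := {u : ℂ // u ∈ U} with hι
  choose O hOopen hOmem hOinj using fun i : ι => local_inj p i.1 (hUq i.1 i.2)
  set W : ι → Set ℂ := fun i => O i ∩ U with hWdef
  have hWopen : ∀ i, IsOpen (W i) := fun i => (hOopen i).inter hUopen
  have hWcover : ⋃ i, W i = U := by
    apply subset_antisymm (iUnion_subset fun i => inter_subset_right)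
    intro u hu
    exact mem_iUnion.2 ⟨⟨u, hu⟩, hOmem _, hu⟩
  obtain ⟨T, hTc, hTeq⟩ := TopologicalSpace.isOpen_iUnion_countable W hWopen
  have hTne : T.Nonempty := by
    rcases eq_empty_or_nonempty T with h | h
    · exfalso
      rw [h] at hTeq
      simp only [mem_empty_iff_false, iUnion_of_empty, iUnion_empty] at hTeq
      rw [hWcover] at hTeq
      exact hUne.ne_empty hTeq.symm
    · exact h
  obtain ⟨e, he⟩ := hTc.exists_eq_range hTne
  have hcover : ⋃ k, W (e k) = U := by
    rw [← hWcover, ← hTeq, he, biUnion_range]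
  -- disjointify
  set S : ℕ → Set ℂ := disjointed (fun k => W (e k)) with hSdef
  have hSsub : ∀ k, S k ⊆ W (e k) := fun k => disjointed_subset _ k
  have hSmeas : ∀ k, MeasurableSet (S k) :=
    MeasurableSet.disjointed (fun k => (hWopen (e k)).measurableSet)
  have hSdisj : Pairwise (Function.onFun Disjoint S) := disjoint_disjointed _
  have hSunion : ⋃ k, S k = U := by rw [hSdef, iUnion_disjointed, hcover]
  have hSinj : ∀ k, Set.InjOn pf (S k) :=
    fun k => (hOinj (e k)).mono ((hSsub k).trans inter_subset_left)
  -- derivative data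
  set f' : ℂ → ℂ →L[ℝ] ℂ :=
    fun x => (ContinuousLinearMap.smulRight (1 : ℂ →L[ℂ] ℂ) (q.eval x)).restrictScalars ℝ
    with hf'def
  have hf' : ∀ x, HasFDerivAt pf (f' x) x :=
    fun x => (p.hasDerivAt x).hasFDerivAt.restrictScalars ℝ
  have hdet : ∀ x, |(f' x).det| = ‖q.eval x‖^2 := by
    intro x
    rw [hf'def, detAux, abs_of_nonneg (Complex.normSq_nonneg _), Complex.sq_norm]
  -- the functions
  set G : ℂ → ENNReal := fun w => ENNReal.ofReal (2*b^2 / (b^2 + ‖w‖^2)^2) with hGdef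
  have hGmeas : Measurable G := (gCont hb).measurable.ennreal_ofReal
  set F : ℂ → ENNReal := fun u =>
    ENNReal.ofReal (2*b^2*‖q.eval u‖^2 / (b^2 + ‖pf u‖^2)^2) with hFdef
  set A : ℕ → Set ℂ := fun k => pf '' S k with hAdef
  have hAmeas : ∀ k, MeasurableSet (A k) := fun k =>
    measurable_image_of_fderivWithin (hSmeas k)
      (fun x _ => (hf' x).hasFDerivWithinAt) (hSinj k)
  -- change of variables on each piece
  have key_k : ∀ k, ∫⁻ x in S k, F x = ∫⁻ w in A k, G w := by
    intro k
    rw [hAdef, lintegral_image_eq_lintegral_abs_det_fderiv_mul volume (hSmeas k)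
      (fun x _ => (hf' x).hasFDerivWithinAt) (hSinj k) G]
    apply setLIntegral_congr_fun (hSmeas k)
    intro x hx
    dsimp only
    rw [hFdef, hGdef, hdet x, ← ENNReal.ofReal_mul (by positivity)]
    congr 1
    ring
  -- counting the fibers
  have hBnull : volume B = 0 := hBfin.measure_zero _
  have count : ∀ w, w ∉ V → ∑' k, (A k).indicator (fun _ => (1:ℝ≥0∞)) w = n := by
    intro w hw
    obtain ⟨fib, hfibmem, hfibcard⟩ := fiber_card p n hn hdeg w (by
      intro x hx hq
      exact hw (hx ▸ mem_image_of_mem pf hq))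
    have step1 : ∀ k, (A k).indicator (fun _ => (1:ℝ≥0∞)) w
        = ∑ x ∈ fib, (S k).indicator (fun _ => (1:ℝ≥0∞)) x := by
      intro k
      by_cases hk : w ∈ A k
      · rw [indicator_of_mem hk]
        obtain ⟨x₀, hx₀S, hx₀w⟩ := hk
        symm
        calc ∑ x ∈ fib, (S k).indicator (fun _ => (1:ℝ≥0∞)) x
            = (S k).indicator (fun _ => (1:ℝ≥0∞)) x₀ := by
              apply Finset.sum_eq_single x₀
              · intro x hx hne
                apply indicator_of_notMem
                intro hxS
                exact hne (hSinj k hxS hx₀S (((hfibmem x).mp hx).trans hx₀w.symm))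
              · intro hx₀
                exact absurd ((hfibmem x₀).mpr hx₀w) hx₀
          _ = 1 := indicator_of_mem hx₀S _
      · rw [indicator_of_notMem hk]
        symm
        apply Finset.sum_eq_zero
        intro x hx
        rw [indicator_of_notMem]
        intro hxS
        exact hk ⟨x, hxS, (hfibmem x).mp hx⟩
    rw [tsum_congr step1, Summable.tsum_finsetSum (fun x _ => ENNReal.summable)]
    have step2 : ∀ x ∈ fib, ∑' k, (S k).indicator (fun _ => (1:ℝ≥0∞)) x = 1 := by
      intro x hx
      have hxU : x ∈ U := by
        intro hxB
        exact hw (((hfibmem x).mp hx) ▸ hxB)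
      obtain ⟨k₀, hk₀⟩ := mem_iUnion.mp (hSunion ▸ hxU)
      rw [tsum_eq_single k₀]
      · rw [indicator_of_mem hk₀]
      · intro k hk
        rw [indicator_of_notMem]
        intro hxk
        exact (hSdisj hk).le_bot ⟨hxk, hk₀⟩
    rw [Finset.sum_congr rfl step2, Finset.sum_const, hfibcard, nsmul_eq_mul, mul_one]
  -- the main lintegral computation
  have hVnull : volume V = 0 := hVfin.measure_zero _
  have count' : ∀ᵐ w, ∑' k, (A k).indicator G w = G w * n := by
    have hVc : ∀ᵐ w : ℂ ∂volume, w ∉ V := by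
      rw [ae_iff]
      simpa using hVnull
    filter_upwards [hVc] with w hw
    have : ∀ k, (A k).indicator G w = G w * (A k).indicator (fun _ => (1:ℝ≥0∞)) w := by
      intro k
      by_cases hk : w ∈ A k <;> simp [indicator_of_mem, indicator_of_notMem, hk]
    rw [tsum_congr this, ENNReal.tsum_mul_left, count w hw]
  have hae : ∀ᵐ x : ℂ ∂volume, x ∈ U := by
    rw [ae_iff]
    simpa [hUdef] using hBnull
  have final_l : ∫⁻ u, F u = ENNReal.ofReal (2*π) * n := by
    calc ∫⁻ u, F u = ∫⁻ u in U, F u := by rw [Measure.restrict_eq_self_of_ae_mem hae]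
      _ = ∑' k, ∫⁻ x in S k, F x := by rw [← hSunion, lintegral_iUnion hSmeas hSdisj]
      _ = ∑' k, ∫⁻ w in A k, G w := tsum_congr key_k
      _ = ∑' k, ∫⁻ w, (A k).indicator G w := by
          refine tsum_congr (fun k => ?_)
          exact (lintegral_indicator (hAmeas k) G).symm
      _ = ∫⁻ w, ∑' k, (A k).indicator G w := by
          rw [lintegral_tsum (fun k => (hGmeas.indicator (hAmeas k)).aemeasurable)]
      _ = ∫⁻ w, G w * n := lintegral_congr_ae count'
      _ = (∫⁻ w, G w) * n := by rw [lintegral_mul_const _ hGmeas]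
      _ = ENNReal.ofReal (2*π) * n := by rw [hGdef, base_lintegral hb]
  -- back to the Bochner integral
  have hcont : Continuous (fun u : ℂ =>
      2 * b ^ 2 * ‖q.eval u‖ ^ 2 / (b ^ 2 + ‖pf u‖ ^ 2) ^ 2) := by
    have h1 : Continuous fun u : ℂ => eval u q := q.continuous
    have h2 : Continuous pf := p.continuous
    apply Continuous.div
    · exact continuous_const.mul ((continuous_norm.comp h1).pow 2)
    · exact (continuous_const.add ((continuous_norm.comp h2).pow 2)).pow 2
    · intro u
      positivity
  rw [integral_eq_lintegral_of_nonneg_ae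
    (Filter.Eventually.of_forall (fun u => by positivity))
    hcont.aestronglyMeasurable]
  have : (∫⁻ u, ENNReal.ofReal
      (2 * b ^ 2 * ‖q.eval u‖ ^ 2 / (b ^ 2 + ‖pf u‖ ^ 2) ^ 2))
      = ENNReal.ofReal (2*π) * n := final_l
  rw [this, ENNReal.toReal_mul, ENNReal.toReal_ofReal (by positivity),
    ENNReal.toReal_natCast]
end

section
/- Let G(Z,W) = Σ_{(i,j)∈S} c_{ij} Z^i W^j ∈ ℂ[Z,W] be a nonzero polynomial with support S (so c_{ij} ≠ 0 for (i,j) ∈ S), let (s,t) ∈ S, and let 0 < e ≤ e' be real numbers. Assume that for every (i,j) ∈ S with (i,j) ≠ (s,t): if i > s then i·e + j ≥ s·e + t; if i < s then i·e' + j ≥ s·e' + t; and if i = s then j > t. Then for every ε > 0 there exist R > 0, δ > 0 and η > 0 such that for all (Z,W) ∈ ℂ² with 0 < |W| < η and R·|W|^{e'} ≤ |Z| ≤ δ·|W|^{e}, one has (|c_{st}| − ε)·|Z|^s·|W|^t ≤ |G(Z,W)| ≤ (|c_{st}| + ε)·|Z|^s·|W|^t. -/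
open Finset

lemma horn_key {z w δ R A e e' a b : ℝ}
    (hz : 0 < z) (hw : 0 < w) (hw1 : w ≤ 1) (hwA : w ≤ A)
    (hδ : 0 < δ) (hδ1 : δ ≤ 1) (hδA : δ ≤ A)
    (hR1 : 1 ≤ R) (hRA : 1/R ≤ A)
    (hzu : z ≤ δ * w ^ e) (hzl : R * w ^ e' ≤ z)
    (hab1 : 0 < a → 1 ≤ a ∧ 0 ≤ e * a + b)
    (hab2 : a < 0 → a ≤ -1 ∧ 0 ≤ e' * a + b)
    (hab3 : a = 0 → 1 ≤ b) :
    z ^ a * w ^ b ≤ A := by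
  rcases lt_trichotomy a 0 with ha | ha | ha
  · obtain ⟨ha1, hab⟩ := hab2 ha
    have hR0 : (0:ℝ) < R := lt_of_lt_of_le one_pos hR1
    have h1 : z ^ a ≤ (R * w ^ e') ^ a :=
      Real.rpow_le_rpow_of_nonpos (by positivity) hzl ha.le
    have h2 : (R * w ^ e') ^ a = R ^ a * w ^ (e' * a) := by
      rw [Real.mul_rpow hR0.le (by positivity), ← Real.rpow_mul hw.le]
    have h3 : z ^ a * w ^ b ≤ R ^ a * w ^ (e' * a + b) := by
      rw [Real.rpow_add hw]
      calc z ^ a * w ^ b ≤ (R ^ a * w ^ (e' * a)) * w ^ b := by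
            rw [← h2]
            exact mul_le_mul_of_nonneg_right h1 (by positivity)
        _ = R ^ a * (w ^ (e' * a) * w ^ b) := by ring
    have h4 : w ^ (e' * a + b) ≤ 1 := Real.rpow_le_one hw.le hw1 hab
    have h5 : R ^ a ≤ R ^ (-1 : ℝ) :=
      Real.rpow_le_rpow_of_exponent_le hR1 ha1
    have h6 : R ^ (-1 : ℝ) = 1 / R := by
      rw [Real.rpow_neg_one]; exact (one_div R).symm
    calc z ^ a * w ^ b ≤ R ^ a * w ^ (e' * a + b) := h3
      _ ≤ R ^ a * 1 := mul_le_mul_of_nonneg_left h4 (by positivity)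
      _ = R ^ a := mul_one _
      _ ≤ 1 / R := h6 ▸ h5
      _ ≤ A := hRA
  · subst ha
    have hb := hab3 rfl
    calc z ^ (0:ℝ) * w ^ b = w ^ b := by rw [Real.rpow_zero, one_mul]
      _ ≤ w ^ (1:ℝ) := Real.rpow_le_rpow_of_exponent_ge hw hw1 hb
      _ = w := Real.rpow_one w
      _ ≤ A := hwA
  · obtain ⟨ha1, hab⟩ := hab1 ha
    have h1 : z ^ a ≤ (δ * w ^ e) ^ a := Real.rpow_le_rpow hz.le hzu ha.le
    have h2 : (δ * w ^ e) ^ a = δ ^ a * w ^ (e * a) := by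
      rw [Real.mul_rpow hδ.le (by positivity), ← Real.rpow_mul hw.le]
    have h3 : z ^ a * w ^ b ≤ δ ^ a * w ^ (e * a + b) := by
      rw [Real.rpow_add hw]
      calc z ^ a * w ^ b ≤ (δ ^ a * w ^ (e * a)) * w ^ b := by
            rw [← h2]
            exact mul_le_mul_of_nonneg_right h1 (by positivity)
        _ = δ ^ a * (w ^ (e * a) * w ^ b) := by ring
    have h4 : w ^ (e * a + b) ≤ 1 := Real.rpow_le_one hw.le hw1 hab
    have h5 : δ ^ a ≤ δ ^ (1:ℝ) := Real.rpow_le_rpow_of_exponent_ge hδ hδ1 ha1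
    calc z ^ a * w ^ b ≤ δ ^ a * w ^ (e * a + b) := h3
      _ ≤ δ ^ a * 1 := mul_le_mul_of_nonneg_left h4 (by positivity)
      _ = δ ^ a := mul_one _
      _ ≤ δ := by rwa [Real.rpow_one] at h5
      _ ≤ A := hδA

/-- Vertex Lemma: let `G(Z,W) = Σ_{(i,j)∈S} c_{ij} Z^i W^j` be
a nonzero polynomial with support `S`, let `(s,t) ∈ S`, and let
`0 < e ≤ e'`.  Assume every other `(i,j) ∈ S` satisfies: `i·e + j ≥ s·e + t`
if `i > s`; `i·e' + j ≥ s·e' + t` if `i < s`; and `j > t` if `i = s`.  Then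
for every `ε > 0` there are `R, δ, η > 0` such that in the horn region
`0 < |W| < η`, `R|W|^{e'} ≤ |Z| ≤ δ|W|^{e}` one has
`(|c_{st}| − ε)|Z|^s|W|^t ≤ |G(Z,W)| ≤ (|c_{st}| + ε)|Z|^s|W|^t`. -/
theorem stmt13 (S : Finset (ℕ × ℕ)) (c : ℕ × ℕ → ℂ)
    (hc : ∀ p ∈ S, c p ≠ 0) (hS : S.Nonempty)
    (G : ℂ → ℂ → ℂ)
    (hG : ∀ Z W : ℂ, G Z W = ∑ p ∈ S, c p * Z ^ p.1 * W ^ p.2)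
    (s t : ℕ) (hst : (s, t) ∈ S)
    (e e' : ℝ) (he : 0 < e) (hee' : e ≤ e')
    (hcond : ∀ p ∈ S, p ≠ (s, t) →
      (s < p.1 → (s : ℝ) * e + t ≤ (p.1 : ℝ) * e + p.2) ∧
      (p.1 < s → (s : ℝ) * e' + t ≤ (p.1 : ℝ) * e' + p.2) ∧
      (p.1 = s → t < p.2)) :
    ∀ ε > (0 : ℝ), ∃ R > (0 : ℝ), ∃ δ > (0 : ℝ), ∃ η > (0 : ℝ),
      ∀ Z W : ℂ, 0 < ‖W‖ → ‖W‖ < η →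
        R * ‖W‖ ^ e' ≤ ‖Z‖ →
        ‖Z‖ ≤ δ * ‖W‖ ^ e →
        (‖c (s, t)‖ - ε) * ‖Z‖ ^ s * ‖W‖ ^ t
            ≤ ‖G Z W‖ ∧
          ‖G Z W‖
            ≤ (‖c (s, t)‖ + ε) * ‖Z‖ ^ s *
                ‖W‖ ^ t := by
  intro ε hε
  set M := S.sup' hS (fun p => ‖c p‖) with hMdef
  have hM : 0 < M :=
    lt_of_lt_of_le (norm_pos_iff.mpr (hc _ hst)) (Finset.le_sup' (fun p => ‖c p‖) hst)
  have hMle : ∀ p ∈ S, ‖c p‖ ≤ M := fun p hp => Finset.le_sup' (fun p => ‖c p‖) hp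
  have hN : 0 < (S.card : ℝ) := by
    exact_mod_cast Finset.card_pos.mpr hS
  set A := ε / ((S.card : ℝ) * M) with hAdef
  have hA : 0 < A := by positivity
  refine ⟨max 1 (1/A), by positivity, min 1 A, by positivity, min 1 A, by positivity, ?_⟩
  intro Z W hW hWη hZl hZu
  set z := ‖Z‖ with hzdef
  set w := ‖W‖ with hwdef
  have hw1 : w ≤ 1 := le_of_lt (lt_of_lt_of_le hWη (min_le_left _ _))
  have hwA : w ≤ A := le_of_lt (lt_of_lt_of_le hWη (min_le_right _ _))
  have hz : 0 < z := lt_of_lt_of_le (by positivity) hZl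
  -- key per-term bound
  have key : ∀ p ∈ S.erase (s, t),
      ‖c p * Z ^ p.1 * W ^ p.2‖ ≤ (ε / S.card) * (z ^ s * w ^ t) := by
    intro p hp
    rw [Finset.mem_erase] at hp
    obtain ⟨hpne, hpS⟩ := hp
    obtain ⟨h1, h2, h3⟩ := hcond p hpS hpne
    set a := (p.1 : ℝ) - s with hadef
    set b := (p.2 : ℝ) - t with hbdef
    have hab1 : 0 < a → 1 ≤ a ∧ 0 ≤ e * a + b := by
      intro h
      have hs : s < p.1 := by exact_mod_cast sub_pos.mp h
      have hs1 : (s : ℝ) + 1 ≤ p.1 := by exact_mod_cast hs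
      exact ⟨by simp [hadef]; linarith, by have := h1 hs; simp [hadef, hbdef]; nlinarith⟩
    have hab2 : a < 0 → a ≤ -1 ∧ 0 ≤ e' * a + b := by
      intro h
      have hs : p.1 < s := by exact_mod_cast sub_neg.mp h
      have hs1 : (p.1 : ℝ) + 1 ≤ s := by exact_mod_cast hs
      exact ⟨by simp [hadef]; linarith, by have := h2 hs; simp [hadef, hbdef]; nlinarith⟩
    have hab3 : a = 0 → 1 ≤ b := by
      intro h
      have hs : p.1 = s := by
        have : (p.1 : ℝ) = s := by linarith [sub_eq_zero.mp h]
        exact_mod_cast this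
      have ht : t < p.2 := h3 hs
      have : (t : ℝ) + 1 ≤ p.2 := by exact_mod_cast ht
      simp [hbdef]; linarith
    have hk : z ^ a * w ^ b ≤ A :=
      horn_key hz hW hw1 hwA (lt_min one_pos hA) (min_le_left _ _) (min_le_right _ _)
        (le_max_left _ _)
        (by
          rw [div_le_iff₀ (by positivity)]
          have h1A : 1 / A ≤ max 1 (1/A) := le_max_right _ _
          rw [div_le_iff₀ hA] at h1A
          linarith)
        hZu hZl hab1 hab2 hab3
    have hsplit : z ^ (p.1 : ℝ) * w ^ (p.2 : ℝ)
        = (z ^ (s : ℝ) * w ^ (t : ℝ)) * (z ^ a * w ^ b) := by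
      rw [show (p.1 : ℝ) = (s : ℝ) + a by simp [hadef],
        show (p.2 : ℝ) = (t : ℝ) + b by simp [hbdef],
        Real.rpow_add hz, Real.rpow_add hW]
      ring
    have habs : ‖c p * Z ^ p.1 * W ^ p.2‖
        = ‖c p‖ * (z ^ p.1 * w ^ p.2) := by
      simp [map_mul, map_pow]; ring
    have hnat : z ^ p.1 * w ^ p.2 = z ^ (p.1 : ℝ) * w ^ (p.2 : ℝ) := by
      rw [Real.rpow_natCast, Real.rpow_natCast]
    have hnat2 : z ^ (s : ℝ) * w ^ (t : ℝ) = z ^ s * w ^ t := by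
      rw [Real.rpow_natCast, Real.rpow_natCast]
    have hMA : M * A = ε / S.card := by
      field_simp [hAdef]
      rw [hAdef]; field_simp
    calc ‖c p * Z ^ p.1 * W ^ p.2‖
        = ‖c p‖ * (z ^ p.1 * w ^ p.2) := habs
      _ ≤ M * (z ^ p.1 * w ^ p.2) := by
          apply mul_le_mul_of_nonneg_right (hMle p hpS) (by positivity)
      _ = M * ((z ^ s * w ^ t) * (z ^ a * w ^ b)) := by
          rw [hnat, hsplit, hnat2]
      _ ≤ M * ((z ^ s * w ^ t) * A) := by
          apply mul_le_mul_of_nonneg_left _ hM.le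
          exact mul_le_mul_of_nonneg_left hk (by positivity)
      _ = (ε / S.card) * (z ^ s * w ^ t) := by rw [← hMA]; ring
  -- bound the tail sum
  set T := ∑ p ∈ S.erase (s, t), c p * Z ^ p.1 * W ^ p.2 with hTdef
  have hT : ‖T‖ ≤ ε * (z ^ s * w ^ t) := by
    calc ‖T‖ ≤ ∑ p ∈ S.erase (s, t), ‖c p * Z ^ p.1 * W ^ p.2‖ :=
          norm_sum_le _ _
      _ ≤ ∑ _p ∈ S.erase (s, t), (ε / S.card) * (z ^ s * w ^ t) :=
          Finset.sum_le_sum key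
      _ = (S.erase (s, t)).card * ((ε / S.card) * (z ^ s * w ^ t)) := by
          rw [Finset.sum_const, nsmul_eq_mul]
      _ ≤ (S.card : ℝ) * ((ε / S.card) * (z ^ s * w ^ t)) := by
          apply mul_le_mul_of_nonneg_right _ (by positivity)
          exact_mod_cast Finset.card_le_card (Finset.erase_subset _ _)
      _ = ε * (z ^ s * w ^ t) := by field_simp
  have hGeq : G Z W = c (s, t) * Z ^ s * W ^ t + T := by
    rw [hG, hTdef, ← Finset.add_sum_erase S _ hst]
  have habsx : ‖c (s, t) * Z ^ s * W ^ t‖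
      = ‖c (s, t)‖ * z ^ s * w ^ t := by
    simp [map_mul, map_pow, hzdef, hwdef]
  have htri1 : ‖G Z W‖ ≤ ‖c (s, t)‖ * z ^ s * w ^ t + ‖T‖ := by
    rw [hGeq, ← habsx]
    exact norm_add_le _ _
  have htri2 : ‖c (s, t)‖ * z ^ s * w ^ t - ‖T‖ ≤ ‖G Z W‖ := by
    rw [hGeq, ← habsx]
    have : ‖c (s, t) * Z ^ s * W ^ t‖
        ≤ ‖c (s, t) * Z ^ s * W ^ t + T‖ + ‖T‖ := by
      calc ‖c (s, t) * Z ^ s * W ^ t‖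
          = ‖(c (s, t) * Z ^ s * W ^ t + T) + (-T)‖ := by ring_nf
        _ ≤ ‖c (s, t) * Z ^ s * W ^ t + T‖ + ‖-T‖ :=
            norm_add_le _ _
        _ = ‖c (s, t) * Z ^ s * W ^ t + T‖ + ‖T‖ := by
            rw [norm_neg]
    linarith
  constructor
  · have heq : (‖c (s, t)‖ - ε) * z ^ s * w ^ t
        = ‖c (s, t)‖ * z ^ s * w ^ t - ε * (z ^ s * w ^ t) := by ring
    rw [heq]
    linarith
  · have heq : (‖c (s, t)‖ + ε) * z ^ s * w ^ t
        = ‖c (s, t)‖ * z ^ s * w ^ t + ε * (z ^ s * w ^ t) := by ring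
    rw [heq]
    linarith
end
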